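/- Let S_1,...,S_ℓ ⊆ V be subsets of the vertex set of a directed tree (V,U), each with δ^-(S_i) = ∅, and let x = ∑_{i=1}^ℓ χ^{δ^+(S_i)} ∈ Z^U. For vertices v, w ∈ V, let t_{vw} ∈ {-1,0,1}^U assign to each tree edge u the value +1 if the unique v–w path in the tree traverses u forwardly, -1 if backwardly, and 0 if the path avoids u. Then t_{vw}^T x = |{i : v ∈ S_i}| - |{i : w ∈ S_i}|. -/

import Mathlib

lemma stmt18_aux {V : Type*} [Fintype V] [DecidableEq V] (U : Finset (V × V))
    (hanti : ∀ a b : V, (a, b) ∈ U → (b, a) ∉ U)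
    (G : SimpleGraph V) (hG : G = SimpleGraph.fromRel (fun a b => (a, b) ∈ U))
    (f : V → ℤ) :
    ∀ {v w : V} (p : G.Walk v w), p.IsPath → ∀ t : V × V → ℤ,
      (∀ u ∈ U, t u =
        if (u.1, u.2) ∈ p.darts.map (fun d => d.toProd) then 1
        else if (u.2, u.1) ∈ p.darts.map (fun d => d.toProd) then -1 else 0) →
      (∑ u ∈ U, t u * (f u.1 - f u.2)) = f v - f w := by
  intro v w p
  induction p with
  | nil =>
    intro _ t ht
    have : ∀ u ∈ U, t u * (f u.1 - f u.2) = 0 := by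
      intro u hu
      rw [ht u hu]
      simp
    rw [Finset.sum_congr rfl this]
    simp
  | @cons v a w hadj q ih =>
    intro hp t ht
    have hps := (SimpleGraph.Walk.cons_isPath_iff hadj q).mp hp
    have hqpath := hps.1
    have hvns : v ∉ q.support := hps.2
    have hva : v ≠ a := G.ne_of_adj hadj
    -- darts of cons
    have hD : (SimpleGraph.Walk.cons hadj q).darts.map (fun d => d.toProd)
        = (v, a) :: q.darts.map (fun d => d.toProd) := by
      simp [SimpleGraph.Walk.darts_cons]
    -- no dart of q touches v
    have hnotq : ∀ x : V, (v, x) ∉ q.darts.map (fun d => d.toProd)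
        ∧ (x, v) ∉ q.darts.map (fun d => d.toProd) := by
      intro x
      constructor
      · intro hmem
        obtain ⟨d, hd, hdp⟩ := List.mem_map.mp hmem
        have : d.fst = v := by rw [hdp]
        exact hvns (this ▸ SimpleGraph.Walk.dart_fst_mem_support_of_mem_darts q hd)
      · intro hmem
        obtain ⟨d, hd, hdp⟩ := List.mem_map.mp hmem
        have : d.snd = v := by rw [hdp]
        exact hvns (this ▸ SimpleGraph.Walk.dart_snd_mem_support_of_mem_darts q hd)
    -- exactly one of (v,a),(a,v) in U
    have hadj' : (v, a) ∈ U ∨ (a, v) ∈ U := by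
      rw [hG] at hadj
      rcases hadj.2 with h | h
      · exact Or.inl h
      · exact Or.inr h
    set u₀ : V × V := if (v, a) ∈ U then (v, a) else (a, v) with hu₀def
    have hu₀ : u₀ ∈ U := by
      by_cases h : (v, a) ∈ U
      · simp [hu₀def, h]
      · simp [hu₀def, h]
        tauto
    have hu₀cases : u₀ = (v, a) ∧ (v, a) ∈ U ∨ u₀ = (a, v) ∧ (a, v) ∈ U ∧ (v, a) ∉ U := by
      by_cases h : (v, a) ∈ U
      · exact Or.inl ⟨by simp [hu₀def, h], h⟩
      · exact Or.inr ⟨by simp [hu₀def, h], by tauto, h⟩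
    set t' : V × V → ℤ := fun u => if u = (v, a) ∨ u = (a, v) then 0 else t u with ht'def
    have ht' : ∀ u ∈ U, t' u =
        if (u.1, u.2) ∈ q.darts.map (fun d => d.toProd) then 1
        else if (u.2, u.1) ∈ q.darts.map (fun d => d.toProd) then -1 else 0 := by
      intro u hu
      by_cases h1 : u = (v, a)
      · subst h1
        simp only [ht'def]
        rw [if_pos (by tauto)]
        rw [if_neg (hnotq a).1, if_neg]
        intro hc
        exact (hnotq a).2 hc
      · by_cases h2 : u = (a, v)
        · subst h2
          simp only [ht'def]
          rw [if_pos (by tauto)]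
          rw [if_neg, if_neg]
          · intro hc; exact (hnotq a).1 hc
          · intro hc; exact (hnotq a).2 hc
        · simp only [ht'def]
          rw [if_neg (by tauto)]
          rw [ht u hu, hD]
          have e1 : ((u.1, u.2) ∈ (v, a) :: q.darts.map (fun d => d.toProd))
              ↔ (u.1, u.2) ∈ q.darts.map (fun d => d.toProd) := by
            constructor
            · intro h
              rcases List.mem_cons.mp h with h | h
              · exact absurd (by rw [← h]) h1
              · exact h
            · exact fun h => List.mem_cons_of_mem _ h
          have e2 : ((u.2, u.1) ∈ (v, a) :: q.darts.map (fun d => d.toProd))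
              ↔ (u.2, u.1) ∈ q.darts.map (fun d => d.toProd) := by
            constructor
            · intro h
              rcases List.mem_cons.mp h with h | h
              · exfalso; apply h2
                have := Prod.mk.injEq .. ▸ h
                have h21 : u.2 = v := (Prod.mk.injEq _ _ _ _ ▸ h).1
                have h22 : u.1 = a := (Prod.mk.injEq _ _ _ _ ▸ h).2
                exact Prod.ext h22 h21
              · exact h
            · exact fun h => List.mem_cons_of_mem _ h
          simp only [e1, e2]
    have key : ∀ u ∈ U, t u * (f u.1 - f u.2)
        = t' u * (f u.1 - f u.2) + (if u = u₀ then f v - f a else 0) := by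
      intro u hu
      by_cases h : u = u₀
      · subst h
        rcases hu₀cases with ⟨h1, h2⟩ | ⟨h1, h2, h3⟩
        · rw [h1]
          simp only [ht'def]
          rw [if_pos (by tauto), if_pos trivial]
          have := ht (v, a) (h1 ▸ hu)
          rw [hD] at this
          rw [this]
          simp
        · rw [h1]
          simp only [ht'def]
          rw [if_pos (by tauto), if_pos trivial]
          have := ht (a, v) (h1 ▸ hu)
          rw [hD] at this
          simp only at this
          rw [if_neg, if_pos List.mem_cons_self] at this
          · rw [this]; ring
          · intro hc
            rcases List.mem_cons.mp hc with hc | hc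
            · exact hva ((Prod.mk.injEq _ _ _ _ ▸ hc).2.symm ▸ rfl)
            · exact (hnotq a).2 hc
      · rw [if_neg h]
        have : t' u = t u := by
          simp only [ht'def]
          rw [if_neg]
          rintro (h1 | h2)
          · rcases hu₀cases with ⟨e, _⟩ | ⟨_, _, h3⟩
            · exact h (h1.trans e.symm)
            · exact h3 (h1 ▸ hu)
          · rcases hu₀cases with ⟨_, h2'⟩ | ⟨e, _, _⟩
            · exact hanti v a h2' (h2 ▸ hu)
            · exact h (h2.trans e.symm)
        rw [this]
        ring
    rw [Finset.sum_congr rfl key, Finset.sum_add_distrib]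
    rw [ih hqpath t' ht']
    rw [Finset.sum_ite_eq' U u₀ (fun _ => f v - f a), if_pos hu₀]
    ring


/-- Let `(V,U)` be a directed tree, `S₁,...,S_ℓ ⊆ V` sets with no incoming
arcs, and `x = ∑ χ^{δ⁺(Sᵢ)}`.  For vertices `v, w` let `t` assign to each tree arc `+1`/`-1`/`0`
according to whether the unique `v`–`w` path traverses it forwardly/backwardly/not at all.
Then `tᵀ x = |{i : v ∈ Sᵢ}| - |{i : w ∈ Sᵢ}|`. -/
theorem stmt18 (V : Type*) [Fintype V] [DecidableEq V] (U : Finset (V × V))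
    (hloop : ∀ a : V, (a, a) ∉ U)
    (hanti : ∀ a b : V, (a, b) ∈ U → (b, a) ∉ U)
    (G : SimpleGraph V) (hG : G = SimpleGraph.fromRel (fun a b => (a, b) ∈ U))
    (hTree : G.IsTree)
    (ℓ : ℕ) (S : Fin ℓ → Finset V)
    (hS : ∀ i : Fin ℓ, ∀ u ∈ U, u.2 ∈ S i → u.1 ∈ S i)
    (v w : V) (p : G.Walk v w) (hp : p.IsPath)
    (t : V × V → ℤ)
    (ht : ∀ u ∈ U, t u =
      if (u.1, u.2) ∈ p.darts.map (fun d => d.toProd) then 1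
      else if (u.2, u.1) ∈ p.darts.map (fun d => d.toProd) then -1 else 0) :
    (∑ u ∈ U, t u * (∑ i : Fin ℓ, if u.1 ∈ S i ∧ u.2 ∉ S i then (1 : ℤ) else 0)) =
      ((Finset.univ.filter fun i : Fin ℓ => v ∈ S i).card : ℤ) -
        ((Finset.univ.filter fun i : Fin ℓ => w ∈ S i).card : ℤ) := by
  have hcard : ∀ z : V, ((Finset.univ.filter fun i : Fin ℓ => z ∈ S i).card : ℤ)
      = ∑ i : Fin ℓ, (if z ∈ S i then (1 : ℤ) else 0) := by
    intro z
    rw [Finset.card_filter]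
    push_cast
    rfl
  rw [hcard, hcard, ← Finset.sum_sub_distrib]
  simp_rw [Finset.mul_sum]
  rw [Finset.sum_comm]
  apply Finset.sum_congr rfl
  intro i _
  have hind : ∀ u ∈ U, t u * (if u.1 ∈ S i ∧ u.2 ∉ S i then (1 : ℤ) else 0)
      = t u * ((if u.1 ∈ S i then (1 : ℤ) else 0) - (if u.2 ∈ S i then (1 : ℤ) else 0)) := by
    intro u hu
    congr 1
    by_cases h2 : u.2 ∈ S i
    · have h1 := hS i u hu h2
      simp [h1, h2]
    · by_cases h1 : u.1 ∈ S i <;> simp [h1, h2]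
  rw [Finset.sum_congr rfl hind]
  exact stmt18_aux U hanti G hG (fun z => if z ∈ S i then (1 : ℤ) else 0) p hp t ht
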